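/- Let d : Fin 6 → ℕ. If the polynomial 1 − 4t³ − t⁴ + Σ_{i=1}^{6} t^{d_i} − 2t⁷ in ℤ[t] is divisible by (1−t)³, then d_i = 5 for all i. -/
import Mathlib


open Polynomial

private lemma aux1 (n : ℕ) : (derivative (X ^ n : Polynomial ℤ)).eval 1 = (n : ℤ) := by
  simp [derivative_X_pow]

private lemma aux2 (n : ℕ) :
    (derivative (derivative (X ^ n : Polynomial ℤ))).eval 1 = (n : ℤ) ^ 2 - n := by
  match n with
  | 0 => simp
  | 1 => simp
  | (m + 2) =>
    simp [derivative_X_pow]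
    ring

/-- Let `d : Fin 6 → ℕ`. If the polynomial
`1 − 4t³ − t⁴ + Σ_{i} t^{d i} − 2t⁷` in `ℤ[t]` is divisible by `(1 − t)³`,
then `d i = 5` for all `i`. -/
theorem degrees_all_five_of_dvd (d : Fin 6 → ℕ)
    (h : ((1 - X) ^ 3 : Polynomial ℤ) ∣
      (1 - 4 * X ^ 3 - X ^ 4 + ∑ i : Fin 6, X ^ (d i) - 2 * X ^ 7)) :
    ∀ i, d i = 5 := by
  obtain ⟨q, hq⟩ := h
  have h1 : (derivative (1 - 4 * X ^ 3 - X ^ 4 + ∑ i : Fin 6, X ^ (d i) - 2 * X ^ 7 :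
      Polynomial ℤ)).eval 1 = 0 := by
    rw [hq]
    simp [derivative_mul, derivative_pow]
  have h2 : (derivative (derivative (1 - 4 * X ^ 3 - X ^ 4 + ∑ i : Fin 6, X ^ (d i)
      - 2 * X ^ 7 : Polynomial ℤ))).eval 1 = 0 := by
    rw [hq]
    simp [derivative_mul, derivative_pow]
  simp only [derivative_add, derivative_sub, derivative_mul, derivative_one, derivative_C,
    derivative_sum, eval_add, eval_sub, eval_mul, eval_finset_sum, aux1, aux2] at h1 h2
  simp only [derivative_X_pow, derivative_ofNat, derivative_one] at h1 h2
  norm_num at h1 h2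
  -- h1 : Σ d i = 30 (in some form), h2 : second derivative condition
  have key1 : (∑ i : Fin 6, (d i : ℤ)) = 30 := by linarith
  have key2 : (∑ i : Fin 6, (d i : ℤ) ^ 2) = 150 := by
    have : (∑ i : Fin 6, ((d i : ℤ) ^ 2 - d i)) = 120 := by
      rw [Finset.sum_sub_distrib, key1]; linarith
    rw [Finset.sum_sub_distrib, key1] at this
    linarith
  have hz : (∑ i : Fin 6, ((d i : ℤ) - 5) ^ 2) = 0 := by
    have expand : (∑ i : Fin 6, ((d i : ℤ) - 5) ^ 2)
        = (∑ i : Fin 6, ((d i : ℤ) ^ 2 - 10 * (d i : ℤ) + 25)) := by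
      exact Finset.sum_congr rfl fun i _ => by ring
    rw [expand, Finset.sum_add_distrib, Finset.sum_sub_distrib, ← Finset.mul_sum, key1, key2]
    simp
  intro i
  have hi : ((d i : ℤ) - 5) ^ 2 = 0 := by
    exact (Finset.sum_eq_zero_iff_of_nonneg
      (fun j (_ : j ∈ Finset.univ) => sq_nonneg ((d j : ℤ) - 5))).mp hz i (Finset.mem_univ i)
  have : (d i : ℤ) = 5 := by nlinarith [sq_nonneg ((d i : ℤ) - 5)]
  exact_mod_cast this
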